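/- For 0 < p < 1, 0 < q < 1, p ≠ q, and positive integer δ₁, the weighted sum ∑_{k=2}^{δ₁+1} k·((1-p)^{k-1} - (1-q)^{k-1})/(q-p) + ∑_{k=δ₁+2}^{∞} k·((1-p)^{δ₁} - (1-q)^{δ₁})·(1-p)^{k-δ₁-1}/(q-p) equals ((p+q)(1 - (1-q)^{δ₁}) - pq·δ₁·(1-q)^{δ₁})/(p²q²). -/

import Mathlib

lemma sum_aux (x : ℝ) : ∀ n : ℕ,
    (∑ k ∈ Finset.Icc 2 (n + 1), (k : ℝ) * x ^ (k - 1)) * (1 - x) ^ 2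
      = 1 - ((n : ℝ) + 2) * x ^ (n + 1) + ((n : ℝ) + 1) * x ^ (n + 2) - (1 - x) ^ 2
  | 0 => by
    rw [show Finset.Icc 2 1 = ∅ from Finset.Icc_eq_empty (by norm_num)]
    simp; ring
  | (n + 1) => by
    rw [show n + 1 + 1 = n + 2 from rfl, Finset.sum_Icc_succ_top (by omega : 2 ≤ n + 2)]
    have h := sum_aux x n
    push_cast
    linear_combination h

theorem stmt_1 (p q : ℝ) (δ₁ : ℕ)
    (hp : 0 < p) (hp1 : p < 1) (hq : 0 < q) (hq1 : q < 1) (hpq : p ≠ q)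
    (hδ₁ : 1 ≤ δ₁) :
    (∑ k ∈ Finset.Icc 2 (δ₁ + 1), (k : ℝ) * ((1 - p) ^ (k - 1) - (1 - q) ^ (k - 1)) / (q - p))
      + (∑' j : ℕ, ((δ₁ + 2 + j : ℕ) : ℝ) * (((1 - p) ^ δ₁ - (1 - q) ^ δ₁) * (1 - p) ^ (j + 1)) / (q - p))
    = ((p + q) * (1 - (1 - q) ^ δ₁) - p * q * δ₁ * (1 - q) ^ δ₁) / (p ^ 2 * q ^ 2) := by
  have hp0 : p ≠ 0 := ne_of_gt hp
  have hq0 : q ≠ 0 := ne_of_gt hq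
  have hqp : q - p ≠ 0 := sub_ne_zero.mpr (Ne.symm hpq)
  have ha0 : (0:ℝ) ≤ 1 - p := by linarith
  have ha1 : 1 - p < 1 := by linarith
  have ha1' : ‖(1 - p : ℝ)‖ < 1 := by rw [Real.norm_eq_abs, abs_of_nonneg ha0]; exact ha1
  -- finite sum split
  have hfin : (∑ k ∈ Finset.Icc 2 (δ₁ + 1),
        (k : ℝ) * ((1 - p) ^ (k - 1) - (1 - q) ^ (k - 1)) / (q - p))
      = ((∑ k ∈ Finset.Icc 2 (δ₁ + 1), (k : ℝ) * (1 - p) ^ (k - 1))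
        - (∑ k ∈ Finset.Icc 2 (δ₁ + 1), (k : ℝ) * (1 - q) ^ (k - 1))) / (q - p) := by
    rw [← Finset.sum_sub_distrib, ← Finset.sum_div]
    congr 1
    exact Finset.sum_congr rfl fun k _ => by ring
  have hSa : (∑ k ∈ Finset.Icc 2 (δ₁ + 1), (k : ℝ) * (1 - p) ^ (k - 1))
      = (1 - ((δ₁ : ℝ) + 2) * (1 - p) ^ (δ₁ + 1) + ((δ₁ : ℝ) + 1) * (1 - p) ^ (δ₁ + 2) - p ^ 2)
        / p ^ 2 := by
    rw [eq_div_iff (pow_ne_zero 2 hp0)]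
    linear_combination sum_aux (1 - p) δ₁
  have hSb : (∑ k ∈ Finset.Icc 2 (δ₁ + 1), (k : ℝ) * (1 - q) ^ (k - 1))
      = (1 - ((δ₁ : ℝ) + 2) * (1 - q) ^ (δ₁ + 1) + ((δ₁ : ℝ) + 1) * (1 - q) ^ (δ₁ + 2) - q ^ 2)
        / q ^ 2 := by
    rw [eq_div_iff (pow_ne_zero 2 hq0)]
    linear_combination sum_aux (1 - q) δ₁
  -- tsum evaluation
  set C : ℝ := (1 - p) ^ δ₁ - (1 - q) ^ δ₁ with hC
  have hterm : ∀ j : ℕ, ((δ₁ + 2 + j : ℕ) : ℝ) * (C * (1 - p) ^ (j + 1)) / (q - p)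
      = (((δ₁ : ℝ) + 2) * C * (1 - p) / (q - p)) * (1 - p) ^ j
        + (C * (1 - p) / (q - p)) * ((j : ℝ) * (1 - p) ^ j) := by
    intro j; push_cast; ring
  have hs1 : Summable (fun j : ℕ => (((δ₁ : ℝ) + 2) * C * (1 - p) / (q - p)) * (1 - p) ^ j) :=
    (summable_geometric_of_lt_one ha0 ha1).mul_left _
  have hs2' : Summable (fun j : ℕ => (j : ℝ) * (1 - p) ^ j) := by
    have := summable_pow_mul_geometric_of_norm_lt_one (R := ℝ) 1 ha1'
    simpa using this
  have hs2 : Summable (fun j : ℕ => (C * (1 - p) / (q - p)) * ((j : ℝ) * (1 - p) ^ j)) :=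
    hs2'.mul_left _
  have htsum : (∑' j : ℕ, ((δ₁ + 2 + j : ℕ) : ℝ) * (C * (1 - p) ^ (j + 1)) / (q - p))
      = (((δ₁ : ℝ) + 2) * C * (1 - p) / (q - p)) * (1 - (1 - p))⁻¹
        + (C * (1 - p) / (q - p)) * ((1 - p) / (1 - (1 - p)) ^ 2) := by
    rw [tsum_congr hterm, Summable.tsum_add hs1 hs2, tsum_mul_left, tsum_mul_left,
      tsum_geometric_of_lt_one ha0 ha1, tsum_coe_mul_geometric_of_norm_lt_one ha1']
  rw [hfin, hSa, hSb, htsum, hC]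
  rw [show (1 : ℝ) - (1 - p) = p from by ring]
  field_simp
  ring
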